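/- Let p be a prime with p > 5 and let S be a subset of ZMod p with exactly four elements such that 0, 1, 2 ∈ S (here 0, 1, 2 denote the images in ZMod p of the natural numbers 0, 1, 2). Suppose there exists c' ∈ S with c' ≠ 1 and 2*c' - 1 ∈ S. Then S equals one of the four sets {-1, 0, 1, 2}, {0, 1, 2, 3}, {0, 1, 2, 2⁻¹}, {0, 1, 2, 3*2⁻¹}, where 2⁻¹ denotes the multiplicative inverse of 2 in the field ZMod p. -/

import Mathlib

lemma zmod_small_ne_zero (p k : ℕ) [NeZero p] (hk : 0 < k) (hkp : k < p) :
    (k : ZMod p) ≠ 0 := by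
  intro hkz
  rw [ZMod.natCast_eq_zero_iff] at hkz
  exact absurd (Nat.le_of_dvd hk hkz) (not_le.mpr hkp)

/-- Second normalization step: a four-element color set containing 0, 1, 2 with a
crossing at an arc colored 1 must be one of four specific sets. -/
theorem fox_four_color_set_classification
    (p : ℕ) (hp : p.Prime) (hp5 : 5 < p) (S : Finset (ZMod p))
    (hcard : S.card = 4)
    (h0 : (0 : ZMod p) ∈ S) (h1 : (1 : ZMod p) ∈ S) (h2 : (2 : ZMod p) ∈ S)
    (h : ∃ c' ∈ S, c' ≠ 1 ∧ 2 * c' - 1 ∈ S) :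
    S = {-1, 0, 1, 2} ∨ S = {0, 1, 2, 3} ∨
    S = {0, 1, 2, (2 : ZMod p)⁻¹} ∨ S = {0, 1, 2, 3 * (2 : ZMod p)⁻¹} := by
  haveI : Fact p.Prime := ⟨hp⟩
  haveI : NeZero p := ⟨hp.ne_zero⟩
  have h1z : (1 : ZMod p) ≠ 0 := by
    have := zmod_small_ne_zero p 1 one_pos (by omega); simpa using this
  have h2z : (2 : ZMod p) ≠ 0 := by
    have := zmod_small_ne_zero p 2 two_pos (by omega); simpa using this
  have h3z : (3 : ZMod p) ≠ 0 := by
    have := zmod_small_ne_zero p 3 (by norm_num) (by omega); simpa using this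
  have h4z : (4 : ZMod p) ≠ 0 := by
    have := zmod_small_ne_zero p 4 (by norm_num) (by omega); simpa using this
  have h21 : (2 : ZMod p) ≠ 1 := by
    intro hc; apply h1z; linear_combination hc
  have h31 : (3 : ZMod p) ≠ 1 := by
    intro hc; apply h2z; linear_combination hc
  have h32 : (3 : ZMod p) ≠ 2 := by
    intro hc; apply h1z; linear_combination hc
  -- extract the fourth element d
  have hsub : ({0, 1, 2} : Finset (ZMod p)) ⊆ S := by
    intro x hx; simp at hx; rcases hx with rfl | rfl | rfl <;> assumption
  have hc3 : ({0, 1, 2} : Finset (ZMod p)).card = 3 := by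
    rw [Finset.card_insert_of_notMem, Finset.card_insert_of_notMem] <;> simp [h21.symm, h1z.symm, h2z.symm]
  have hdc : (S \ {0, 1, 2}).card = 1 := by
    rw [Finset.card_sdiff_of_subset hsub, hcard, hc3]
  obtain ⟨d, hd⟩ := Finset.card_eq_one.mp hdc
  have hSd : S = {0, 1, 2, d} := by
    have := Finset.sdiff_union_of_subset hsub
    rw [hd] at this
    rw [← this]
    ext x
    simp [Finset.mem_sdiff, Finset.mem_insert]
    tauto
  obtain ⟨c, hcS, hc1, hcc⟩ := h
  rw [hSd] at hcS hcc
  simp only [Finset.mem_insert, Finset.mem_singleton] at hcS hcc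
  rcases hcS with rfl | rfl | rfl | rfl
  · -- c = 0, 2*0-1 = -1 ∈ S
    left
    have hm1 : (-1 : ZMod p) = d := by
      rcases hcc with hc | hc | hc | hc
      · exfalso; apply h1z; linear_combination -hc
      · exfalso; apply h2z; linear_combination -hc
      · exfalso; apply h3z; linear_combination -hc
      · linear_combination hc
    rw [hSd, ← hm1, Finset.pair_comm 2 (-1), Finset.insert_comm 1 (-1),
      Finset.insert_comm 0 (-1)]
  · exact absurd rfl hc1
  · -- c = 2, 3 ∈ S
    have h3 : (3 : ZMod p) = d := by
      rcases hcc with hc | hc | hc | hc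
      · exact absurd (by linear_combination hc) h3z
      · exact absurd (by linear_combination hc) h31
      · exact absurd (by linear_combination hc) h32
      · linear_combination hc
    right; left; rw [hSd, ← h3]
  · -- c = d, 2d - 1 ∈ {0,1,2,d}
    rcases hcc with hc | hc | hc | hc
    · right; right; left
      have hcv : c = (2 : ZMod p)⁻¹ := by
        field_simp
        linear_combination hc
      rw [hSd, hcv]
    · exact absurd (mul_left_cancel₀ h2z (by linear_combination hc)) hc1
    · right; right; right
      have hcv : c = 3 * (2 : ZMod p)⁻¹ := by
        field_simp
        linear_combination hc
      rw [hSd, hcv]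
    · exact absurd (by linear_combination hc) hc1
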